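/- Let B_n be the braid group on n strands, presented by generators σ_1, ..., σ_{n-1} with relations σ_i σ_j = σ_j σ_i for |i-j| > 1 and σ_i σ_j σ_i = σ_j σ_i σ_j for |i-j| = 1. Define a_i = (σ_i σ_{i+1} ⋯ σ_{n-1})(σ_{n-1} ⋯ σ_{i+1} σ_i) for 1 ≤ i ≤ n-1. Then the elements a_1, ..., a_{n-1} pairwise commute. -/

import Mathlib

/-- Braid relations on `m` generators `σ_0, …, σ_{m-1}`:
`σ_i σ_j = σ_j σ_i` when `|i-j| > 1` and `σ_i σ_j σ_i = σ_j σ_i σ_j` when `|i-j| = 1`. -/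
def braidRels (m : ℕ) : Set (FreeGroup (Fin m)) :=
  { r | (∃ i j : Fin m, (i : ℕ) + 1 < (j : ℕ) ∧
          r = FreeGroup.of i * FreeGroup.of j * (FreeGroup.of i)⁻¹ * (FreeGroup.of j)⁻¹) ∨
        (∃ i j : Fin m, (i : ℕ) + 1 = (j : ℕ) ∧
          r = FreeGroup.of i * FreeGroup.of j * FreeGroup.of i *
              (FreeGroup.of j * FreeGroup.of i * FreeGroup.of j)⁻¹) }

/-- The braid group `B_n` on `n` strands. -/
def BraidGroup (n : ℕ) := PresentedGroup (braidRels (n - 1))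

instance (n : ℕ) : Group (BraidGroup n) := by unfold BraidGroup; infer_instance

/-- The generator `σ_i` of `B_n` (0-indexed), extended by `1` for out-of-range indices. -/
def sigma (n : ℕ) (k : ℕ) : BraidGroup n :=
  if h : k < n - 1 then PresentedGroup.of (⟨k, h⟩ : Fin (n - 1)) else 1

/-- `a_i = (σ_i σ_{i+1} ⋯ σ_{n-2}) (σ_{n-2} ⋯ σ_{i+1} σ_i)` (0-indexed). -/
def braidA (n : ℕ) (i : ℕ) : BraidGroup n :=
  ((List.Ico i (n - 1)).map (sigma n)).prod *
    ((List.Ico i (n - 1)).reverse.map (sigma n)).prod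

/-! ### Auxiliary lemmas -/

lemma braid_rel_eq_one {m : ℕ} {r : FreeGroup (Fin m)} (h : r ∈ braidRels m) :
    PresentedGroup.mk (braidRels m) r = 1 :=
  (QuotientGroup.eq_one_iff r).mpr (Subgroup.subset_normalClosure h)

lemma braid_comm_rel {m : ℕ} (i j : Fin m) (h : (i : ℕ) + 1 < (j : ℕ)) :
    (PresentedGroup.of i : PresentedGroup (braidRels m)) * PresentedGroup.of j
      = PresentedGroup.of j * PresentedGroup.of i := by
  have h1 : PresentedGroup.mk (braidRels m)
      (FreeGroup.of i * FreeGroup.of j * (FreeGroup.of i)⁻¹ * (FreeGroup.of j)⁻¹) = 1 :=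
    braid_rel_eq_one (Or.inl ⟨i, j, h, rfl⟩)
  simp only [map_mul, map_inv] at h1
  rw [mul_inv_eq_one, mul_inv_eq_iff_eq_mul] at h1
  exact h1

lemma braid_braid_rel {m : ℕ} (i j : Fin m) (h : (i : ℕ) + 1 = (j : ℕ)) :
    (PresentedGroup.of i : PresentedGroup (braidRels m)) * PresentedGroup.of j
        * PresentedGroup.of i
      = PresentedGroup.of j * PresentedGroup.of i * PresentedGroup.of j := by
  have h1 : PresentedGroup.mk (braidRels m)
      (FreeGroup.of i * FreeGroup.of j * FreeGroup.of i *
        (FreeGroup.of j * FreeGroup.of i * FreeGroup.of j)⁻¹) = 1 :=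
    braid_rel_eq_one (Or.inr ⟨i, j, h, rfl⟩)
  simp only [map_mul, map_inv] at h1
  rw [mul_inv_eq_one] at h1
  exact h1

lemma sigma_comm (n k l : ℕ) (h : k + 1 < l) :
    sigma n k * sigma n l = sigma n l * sigma n k := by
  unfold sigma
  by_cases hl : l < n - 1
  · have hk : k < n - 1 := by omega
    simp only [hk, hl, ↓reduceDIte]
    exact braid_comm_rel ⟨k, hk⟩ ⟨l, hl⟩ h
  · simp only [hl, ↓reduceDIte, mul_one, one_mul]

lemma sigma_braid (n k : ℕ) (h : k + 1 < n - 1) :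
    sigma n k * sigma n (k + 1) * sigma n k
      = sigma n (k + 1) * sigma n k * sigma n (k + 1) := by
  have hk : k < n - 1 := by omega
  unfold sigma
  simp only [hk, h, ↓reduceDIte]
  exact braid_braid_rel ⟨k, hk⟩ ⟨k + 1, h⟩ rfl

lemma braidA_eq_one (n i : ℕ) (h : n - 1 ≤ i) : braidA n i = 1 := by
  unfold braidA
  rw [List.Ico.eq_nil_of_le h]
  simp

lemma commute_sigma_braidA (n k j : ℕ) (h : k + 1 < j) :
    Commute (sigma n k) (braidA n j) := by
  unfold braidA
  have key : ∀ y ∈ (List.Ico j (n - 1)).map (sigma n), Commute (sigma n k) y := by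
    intro y hy
    rcases List.mem_map.mp hy with ⟨m, hm, rfl⟩
    have := List.Ico.mem.mp hm
    exact sigma_comm n k m (by omega)
  refine Commute.mul_right (Commute.list_prod_right _ _ key)
    (Commute.list_prod_right _ _ ?_)
  intro y hy
  rcases List.mem_map.mp hy with ⟨m, hm, rfl⟩
  have := List.Ico.mem.mp (List.mem_reverse.mp hm)
  exact sigma_comm n k m (by omega)

lemma braidA_succ (n i : ℕ) :
    braidA n i = sigma n i * braidA n (i + 1) * sigma n i := by
  by_cases h : i < n - 1
  · unfold braidA
    rw [List.Ico.eq_cons h]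
    simp [mul_assoc]
  · have h1 : braidA n i = 1 := braidA_eq_one n i (by omega)
    have h2 : braidA n (i + 1) = 1 := braidA_eq_one n (i + 1) (by omega)
    have h3 : sigma n i = 1 := dif_neg h
    rw [h1, h2, h3, mul_one, mul_one]

/-- The abstract group-theoretic core of the adjacent case. -/
lemma braid_key {G : Type*} [Group G] (σ τ b : G)
    (hbr : σ * τ * σ = τ * σ * τ)
    (hb : σ * b = b * σ)
    (hIH : τ * b * τ * b = b * (τ * b * τ)) :
    σ * (τ * b * τ) * σ * (τ * b * τ) = τ * b * τ * (σ * (τ * b * τ) * σ) := by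
  have h1 : ∀ x : G, τ * (σ * (τ * x)) = σ * (τ * (σ * x)) := by
    intro x
    simp only [← mul_assoc]
    rw [← hbr]
  have h1t : σ * (τ * σ) = τ * (σ * τ) := by
    simpa only [mul_assoc] using hbr
  have h2 : ∀ x : G, σ * (b * x) = b * (σ * x) := by
    intro x
    simp only [← mul_assoc]
    rw [hb]
  have h3 : ∀ x : G, τ * (b * (τ * (b * x))) = b * (τ * (b * (τ * x))) := by
    intro x
    simp only [← mul_assoc]
    rw [hIH]
    simp only [mul_assoc]
  simp only [mul_assoc]
  conv_lhs => rw [h1, h2, ← h2, ← h1, h3]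
  conv_rhs => rw [h1, h2, ← h2, h1t]

lemma braidA_adj (n : ℕ) : ∀ (d i : ℕ), n - 1 - i ≤ d →
    braidA n i * braidA n (i + 1) = braidA n (i + 1) * braidA n i := by
  intro d
  induction d with
  | zero =>
    intro i hi
    have h1 : braidA n i = 1 := braidA_eq_one n i (by omega)
    have h2 : braidA n (i + 1) = 1 := braidA_eq_one n (i + 1) (by omega)
    rw [h1, h2]
  | succ d ih =>
    intro i hi
    by_cases h : i + 1 < n - 1
    · have hIH := ih (i + 1) (by omega)
      rw [braidA_succ n (i + 1)] at hIH
      rw [braidA_succ n i, braidA_succ n (i + 1)]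
      exact braid_key (sigma n i) (sigma n (i + 1)) (braidA n (i + 2))
        (sigma_braid n i h)
        (commute_sigma_braidA n i (i + 2) (by omega))
        hIH
    · have h2 : braidA n (i + 1) = 1 := braidA_eq_one n (i + 1) (by omega)
      rw [h2, mul_one, one_mul]

lemma braidA_comm_lt (n : ℕ) : ∀ (d i j : ℕ), j - i ≤ d → i < j →
    braidA n i * braidA n j = braidA n j * braidA n i := by
  intro d
  induction d with
  | zero => intro i j h hij; omega
  | succ d ih =>
    intro i j h hij
    rcases eq_or_lt_of_le (Nat.succ_le_of_lt hij) with heq | hlt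
    · rw [← heq]
      exact braidA_adj n (n - 1 - i) i le_rfl
    · -- i + 1 < j
      have hσ : Commute (braidA n j) (sigma n i) :=
        (commute_sigma_braidA n i j hlt).symm
      have hx : Commute (braidA n j) (braidA n (i + 1)) :=
        (ih (i + 1) j (by omega) (by omega)).symm
      rw [braidA_succ n i]
      exact ((hσ.mul_right hx).mul_right hσ).symm

theorem braidA_pairwise_commute (n : ℕ) (i j : ℕ)
    (hi : i < n - 1) (hj : j < n - 1) :
    braidA n i * braidA n j = braidA n j * braidA n i := by
  rcases lt_trichotomy i j with h | h | h
  · exact braidA_comm_lt n (j - i) i j le_rfl h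
  · rw [h]
  · exact (braidA_comm_lt n (i - j) j i le_rfl h).symm
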